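/- If S_i ≠ S_{i+1} and j'' is the length of their longest common prefix, then for every column index 1 ≤ j ≤ j''+1, the haplotype indices i and i+1 occupy consecutive positions in PA_j (with i immediately before i+1). -/

import Mathlib

namespace PBWT

/-- The reversed prefix of length `j` (truncated at `w`) of haplotype `i`:
used to express the co-lexicographic order of prefixes. -/
def revPrefix {h w : ℕ} (S : Fin h → Fin w → ℕ) (j : ℕ) (i : Fin h) : List ℕ :=
  ((List.range j).filterMap (fun t => if ht : t < w then some (S i ⟨t, ht⟩) else none)).reverse

/-- `PA` is the stable sort of the haplotype indices by the co-lexicographic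
order of their prefixes of length `j` (ties broken by original index). -/
def IsStableSort {h w : ℕ} (S : Fin h → Fin w → ℕ) (j : ℕ) (PA : Fin h ≃ Fin h) : Prop :=
  ∀ a b : Fin h, a < b →
    List.Lex (· < ·) (revPrefix S j (PA a)) (revPrefix S j (PA b)) ∨
      (revPrefix S j (PA a) = revPrefix S j (PA b) ∧ (PA a).val < (PA b).val)

/-- Number of maximal runs of equal adjacent values in the sequence `f`. -/
def runCount {α : Type*} [DecidableEq α] {n : ℕ} (f : Fin n → α) : ℕ :=
  ((List.ofFn f).destutter (· ≠ ·)).length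

/-- `h''`: the number of indices `i` with `S i ≠ S (i+1)`. -/
noncomputable def adjDiff {h w : ℕ} (S : Fin h → Fin w → ℕ) : ℕ :=
  Nat.card {i : Fin h // ∃ h1 : (i : ℕ) + 1 < h, S i ≠ S ⟨(i : ℕ) + 1, h1⟩}

theorem stmt13 (h w : ℕ) (S : Fin h → Fin w → ℕ) (i : Fin h) (hi : (i : ℕ) + 1 < h)
    (j2 : ℕ) (hj : j2 < w)
    (hne0 : S i ≠ S ⟨(i : ℕ) + 1, hi⟩)
    (hpre : ∀ t : ℕ, ∀ ht : t < j2, S i ⟨t, ht.trans hj⟩ = S ⟨(i : ℕ) + 1, hi⟩ ⟨t, ht.trans hj⟩)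
    (hne : S i ⟨j2, hj⟩ ≠ S ⟨(i : ℕ) + 1, hi⟩ ⟨j2, hj⟩) :
    ∀ t : ℕ, t ≤ j2 → ∀ PA : Fin h ≃ Fin h, IsStableSort S t PA →
      (PA.symm ⟨(i : ℕ) + 1, hi⟩).val = (PA.symm i).val + 1 := by
  intro t ht PA hPA
  set i' : Fin h := ⟨(i : ℕ) + 1, hi⟩ with hi'
  -- the reversed prefixes of length t of i and i' are equal
  have hrev : revPrefix S t i = revPrefix S t i' := by
    unfold revPrefix
    congr 1
    apply List.filterMap_congr
    intro a ha
    have ha' : a < j2 := lt_of_lt_of_le (List.mem_range.mp ha) ht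
    have haw : a < w := ha'.trans hj
    simp only [dif_pos haw]
    exact congrArg some (hpre a ha')
  set a := PA.symm i with hA
  set b := PA.symm i' with hB
  have hPAa : PA a = i := PA.apply_symm_apply i
  have hPAb : PA b = i' := PA.apply_symm_apply i'
  have hii' : (i : ℕ) < (i' : ℕ) := Nat.lt_succ_self _
  have hasym : ∀ L : List ℕ, ¬ List.Lex (· < ·) L L := fun L hL =>
    (List.Lex.asymm (· < ·)).asymm L L hL hL
  have hab : a < b := by
    rcases lt_trichotomy a b with hlt | heq | hgt
    · exact hlt
    · exfalso
      apply hne0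
      have : i = i' := by rw [← hPAa, ← hPAb, heq]
      exact absurd (congrArg Fin.val this) (by simp [hi'])
    · exfalso
      rcases hPA b a hgt with hlex | ⟨_, hltv⟩
      · rw [hPAa, hPAb, ← hrev] at hlex
        exact hasym _ hlex
      · rw [hPAa, hPAb] at hltv
        omega
  -- show b.val = a.val + 1
  have h1 : (a : ℕ) + 1 ≤ (b : ℕ) := hab
  rcases Nat.lt_or_ge ((a : ℕ) + 1) (b : ℕ) with hlt | hge
  · exfalso
    have hcval : (a : ℕ) + 1 < h := lt_trans hlt b.isLt
    set c : Fin h := ⟨(a : ℕ) + 1, hcval⟩ with hc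
    have hac : a < c := by simp [hc, Fin.lt_def]
    have hcb : c < b := by simpa [hc, Fin.lt_def] using hlt
    have H1 := hPA a c hac
    have H2 := hPA c b hcb
    rw [hPAa] at H1
    rw [hPAb] at H2
    set R := revPrefix S t (PA c)
    rcases H1 with hlex1 | ⟨heq1, hlt1⟩
    · rcases H2 with hlex2 | ⟨heq2, _⟩
      · exact hasym _ (List.lex_trans (fun h1 h2 => Nat.lt_trans h1 h2) hlex1 (show List.Lex (· < ·) R (revPrefix S t i) by rwa [← hrev] at hlex2))
      · rw [heq2, ← hrev] at hlex1
        exact hasym _ hlex1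
    · rcases H2 with hlex2 | ⟨_, hlt2⟩
      · rw [← heq1, ← hrev] at hlex2
        exact hasym _ hlex2
      · simp only [hi'] at hlt2
        omega
  · omega

end PBWT
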